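/- Let α, β > 0 and λ < −1/α − 1/β. Define μ(n) = α for n even, β for n odd, and K = max(1/β − 1/α − λ, 1/α − 1/β − λ)/(|λ|·|λ + 1/α + 1/β|). Then for every ε > 0 and every φ : ℕ → ℝ with |φ(n+1) − φ(n) − λ μ(n) φ(n)| ≤ ε μ(n) for all n, there exists x : ℕ → ℝ with x(n+1) = (1 + λ μ(n)) x(n) for all n and |φ(n) − x(n)| ≤ K ε for all n. -/

import Mathlib

open Finset in
lemma pairProd (A B : ℝ) (b : ℕ → ℝ) (hb : ∀ j, b j = if Even j then A else B)
    (n k : ℕ) : ∏ j ∈ Finset.Ico n (n + 2*k), b j = (A*B)^k := by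
  induction k with
  | zero => simp
  | succ k ih =>
    have h1 : n + 2*(k+1) = (n + 2*k) + 1 + 1 := by ring
    rw [h1, Finset.prod_Ico_succ_top (by omega), Finset.prod_Ico_succ_top (by omega), ih]
    rcases Nat.even_or_odd (n + 2*k) with he | ho
    · rw [hb, hb]
      have h2 : ¬ Even (n + 2*k + 1) := by simp [Nat.even_add_one, he]
      simp [he, h2]; ring
    · rw [hb, hb]
      have h2 : Even (n + 2*k + 1) := by simpa [Nat.even_add_one] using ho
      have h3 : ¬ Even (n + 2*k) := by simpa using ho
      simp [h2, h3]; ring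

open Finset in
lemma oddProd (A B : ℝ) (b : ℕ → ℝ) (hb : ∀ j, b j = if Even j then A else B)
    (n k : ℕ) : ∏ j ∈ Finset.Ico n (n + (2*k+1)), b j = b n * (A*B)^k := by
  have h1 : n + (2*k+1) = (n+1) + 2*k := by ring
  rw [h1, ← Finset.prod_Ico_consecutive b (by omega : n ≤ n+1) (by omega : n+1 ≤ n+1+2*k),
    pairProd A B b hb (n+1) k, Nat.Ico_succ_singleton, Finset.prod_singleton]
set_option maxHeartbeats 1000000 in
theorem stmt_15 (α β l : ℝ) (hα : 0 < α) (hβ : 0 < β)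
    (h : l < -1/α - 1/β)
    (μ : ℕ → ℝ) (hμ : ∀ n, μ n = if Even n then α else β)
    (K : ℝ)
    (hK : K = max (1/β - 1/α - l) (1/α - 1/β - l) / (|l| * |l + 1/α + 1/β|))
    (ε : ℝ) (hε : 0 < ε) (φ : ℕ → ℝ)
    (hφ : ∀ n, |φ (n+1) - φ n - l * μ n * φ n| ≤ ε * μ n) :
    ∃ x : ℕ → ℝ, (∀ n, x (n+1) = (1 + l * μ n) * x n) ∧
      ∀ n, |φ n - x n| ≤ K * ε := by
  have hα0 : α ≠ 0 := ne_of_gt hα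
  have hβ0 : β ≠ 0 := ne_of_gt hβ
  have hα' : (0:ℝ) < 1/α := by positivity
  have hβ' : (0:ℝ) < 1/β := by positivity
  have hneg : -1/α - 1/β = -(1/α) - 1/β := by ring
  rw [hneg] at h
  have hl0 : l < 0 := by linarith
  have hLneg : l + 1/α + 1/β < 0 := by linarith
  have haα : 1 + l*α < 0 := by
    have h2 : l * α < (-(1/α) - 1/β) * α := mul_lt_mul_of_pos_right h hα
    have e1 : (-(1/α) - 1/β) * α = -1 - α/β := by field_simp
    have e2 : (0:ℝ) < α/β := by positivity
    rw [e1] at h2; linarith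
  have haβ : 1 + l*β < 0 := by
    have h2 : l * β < (-(1/α) - 1/β) * β := mul_lt_mul_of_pos_right h hβ
    have e1 : (-(1/α) - 1/β) * β = -1 - β/α := by field_simp; ring
    have e2 : (0:ℝ) < β/α := by positivity
    rw [e1] at h2; linarith
  obtain ⟨A, hA_def⟩ : ∃ A : ℝ, A = -(1 + l*α) := ⟨_, rfl⟩
  obtain ⟨B, hB_def⟩ : ∃ B : ℝ, B = -(1 + l*β) := ⟨_, rfl⟩
  have hA : 0 < A := by rw [hA_def]; linarith
  have hB : 0 < B := by rw [hB_def]; linarith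
  have hAB1eq : A*B - 1 = l*(l + 1/α + 1/β)*(α*β) := by
    rw [hA_def, hB_def]; field_simp; ring
  have hlL : 0 < l * (l + 1/α + 1/β) := mul_pos_of_neg_of_neg hl0 hLneg
  have hD : 0 < A*B - 1 := by rw [hAB1eq]; positivity
  have hAB : 1 < A*B := by linarith
  have hABpos : 0 < A*B := by linarith
  obtain ⟨r, hr_def⟩ : ∃ r : ℝ, r = (A*B)⁻¹ := ⟨_, rfl⟩
  have hr0 : 0 ≤ r := by rw [hr_def]; positivity
  have hr1 : r < 1 := by rw [hr_def, inv_lt_one_iff₀]; right; exact hAB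
  have hμpos : ∀ n, 0 < μ n := by intro n; rw [hμ]; split <;> assumption
  obtain ⟨a, ha_def⟩ : ∃ a : ℕ → ℝ, ∀ n, a n = 1 + l * μ n := ⟨_, fun _ => rfl⟩
  obtain ⟨b, hb⟩ : ∃ b : ℕ → ℝ, ∀ j, b j = if Even j then A else B := ⟨_, fun _ => rfl⟩
  have hbpos : ∀ j, 0 < b j := by intro j; rw [hb]; split <;> assumption
  have hab : ∀ j, |a j| = b j := by
    intro j
    rw [ha_def, hb, hμ]
    by_cases hj : Even j
    · simp only [hj, if_true]
      rw [abs_of_neg haα, hA_def]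
    · simp only [hj, if_false]
      rw [abs_of_neg haβ, hB_def]
  have hane : ∀ j, a j ≠ 0 := by
    intro j hj
    have := hab j
    rw [hj, abs_zero] at this
    exact absurd this.symm (ne_of_gt (hbpos j))
  obtain ⟨P, hP_def⟩ : ∃ P : ℕ → ℝ, ∀ n, P n = ∏ j ∈ Finset.range n, a j := ⟨_, fun _ => rfl⟩
  obtain ⟨Pb, hPb_def⟩ : ∃ Pb : ℕ → ℝ, ∀ n, Pb n = ∏ j ∈ Finset.range n, b j := ⟨_, fun _ => rfl⟩
  have hPabs : ∀ n, |P n| = Pb n := by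
    intro n
    rw [hP_def, hPb_def, Finset.abs_prod]
    exact Finset.prod_congr rfl fun j _ => hab j
  have hPbpos : ∀ n, 0 < Pb n := by
    intro n; rw [hPb_def]; exact Finset.prod_pos fun j _ => hbpos j
  have hPne : ∀ n, P n ≠ 0 := by
    intro n hn
    have := hPabs n
    rw [hn, abs_zero] at this
    exact absurd this.symm (ne_of_gt (hPbpos n))
  have hPsucc : ∀ n, P (n+1) = P n * a n := by
    intro n; rw [hP_def, hP_def, Finset.prod_range_succ]
  have hPbsucc : ∀ n m, Pb (n + m) = Pb n * ∏ j ∈ Finset.Ico n (n + m), b j := by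
    intro n m
    rw [hPb_def, hPb_def]
    exact (Finset.prod_range_mul_prod_Ico b (by omega)).symm
  obtain ⟨d, hd_def⟩ : ∃ d : ℕ → ℝ, ∀ k, d k = (φ (k+1) - a k * φ k) / P (k+1) :=
    ⟨_, fun _ => rfl⟩
  have hd : ∀ k, |d k| ≤ ε * μ k / Pb (k+1) := by
    intro k
    rw [hd_def, abs_div, hPabs]
    rw [div_le_div_iff_of_pos_right (hPbpos (k+1))]
    have e : φ (k+1) - a k * φ k = φ (k+1) - φ k - l * μ k * φ k := by
      rw [ha_def]; ring
    rw [e]; exact hφ k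
  -- telescoping identity
  have hψ : ∀ n, φ n = P n * (φ 0 + ∑ k ∈ Finset.range n, d k) := by
    intro n
    induction n with
    | zero => simp [hP_def]
    | succ n ih =>
      rw [Finset.sum_range_succ, hPsucc]
      have hdn : P (n+1) * d n = φ (n+1) - a n * φ n := by
        rw [hd_def, mul_div_cancel₀ _ (hPne (n+1))]
      have e : P n * a n * (φ 0 + (∑ k ∈ Finset.range n, d k + d n))
          = a n * (P n * (φ 0 + ∑ k ∈ Finset.range n, d k)) + (P n * a n) * d n := by ring
      rw [e, ← ih, ← hPsucc, hdn]; ring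
  -- key geometric estimates
  have hμshift : ∀ n k, μ (n + 2*k) = μ n := by
    intro n k
    rw [hμ, hμ]
    have e : Even (n + 2*k) ↔ Even n := by simp [Nat.even_add, Nat.even_mul]
    simp [e]
  have heven : ∀ n k, Pb n * |d (n + 2*k)| ≤ (ε * μ n / b n) * r^k := by
    intro n k
    have h1 : Pb n * |d (n + 2*k)| ≤ Pb n * (ε * μ (n + 2*k) / Pb (n + 2*k + 1)) :=
      mul_le_mul_of_nonneg_left (hd _) (le_of_lt (hPbpos n))
    refine h1.trans_eq ?_
    have h2 : Pb (n + 2*k + 1) = Pb n * (b n * (A*B)^k) := by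
      have e : n + 2*k + 1 = n + (2*k+1) := by omega
      rw [e, hPbsucc n (2*k+1), oddProd A B b hb n k]
    rw [hμshift, h2, hr_def]
    have h3 : Pb n ≠ 0 := ne_of_gt (hPbpos n)
    have h4 : b n ≠ 0 := ne_of_gt (hbpos n)
    have h5 : (A*B) ≠ 0 := ne_of_gt hABpos
    rw [inv_pow]
    field_simp
  have hodd : ∀ n k, Pb n * |d (n + (2*k+1))| ≤ (ε * μ (n+1) / (A*B)) * r^k := by
    intro n k
    have h1 : Pb n * |d (n + (2*k+1))| ≤ Pb n * (ε * μ (n + (2*k+1)) / Pb (n + (2*k+1) + 1)) :=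
      mul_le_mul_of_nonneg_left (hd _) (le_of_lt (hPbpos n))
    refine h1.trans_eq ?_
    have hμs : μ (n + (2*k+1)) = μ (n+1) := by
      have e : n + (2*k+1) = (n+1) + 2*k := by omega
      rw [e, hμshift]
    have h2 : Pb (n + (2*k+1) + 1) = Pb n * (A*B)^(k+1) := by
      have e : n + (2*k+1) + 1 = n + 2*(k+1) := by omega
      rw [e, hPbsucc n (2*(k+1)), pairProd A B b hb n (k+1)]
    rw [hμs, h2, hr_def]
    have h3 : Pb n ≠ 0 := ne_of_gt (hPbpos n)
    have h5 : (A*B) ≠ 0 := ne_of_gt hABpos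
    rw [inv_pow]
    field_simp
    ring
  have hgeo : Summable (fun k : ℕ => r^k) := summable_geometric_of_lt_one hr0 hr1
  have hsum_even : ∀ n, Summable (fun k => Pb n * |d (n + 2*k)|) := fun n =>
    Summable.of_nonneg_of_le (fun k => mul_nonneg (le_of_lt (hPbpos n)) (abs_nonneg _))
      (heven n) (hgeo.mul_left _)
  have hsum_odd : ∀ n, Summable (fun k => Pb n * |d (n + (2*k+1))|) := fun n =>
    Summable.of_nonneg_of_le (fun k => mul_nonneg (le_of_lt (hPbpos n)) (abs_nonneg _))
      (hodd n) (hgeo.mul_left _)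
  have hfsum : ∀ n, Summable (fun k => Pb n * |d (n + k)|) := fun n =>
    Summable.even_add_odd (hsum_even n) (hsum_odd n)
  have hdabs : Summable (fun k => |d k|) := by
    have h0 := (hfsum 0).mul_left (Pb 0)⁻¹
    have hPb0 : Pb 0 ≠ 0 := ne_of_gt (hPbpos 0)
    have e : ∀ k : ℕ, (Pb 0)⁻¹ * (Pb 0 * |d (0 + k)|) = |d k| := by
      intro k
      rw [inv_mul_cancel_left₀ hPb0, Nat.zero_add]
    exact (summable_congr e).1 h0
  have hdsum : Summable d := hdabs.of_abs
  -- the exact solution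
  refine ⟨fun n => P n * (φ 0 + ∑' k, d k), ?_, ?_⟩
  · intro n
    show P (n+1) * (φ 0 + ∑' k, d k) = (1 + l * μ n) * (P n * (φ 0 + ∑' k, d k))
    rw [hPsucc, ha_def]
    ring
  · intro n
    show |φ n - P n * (φ 0 + ∑' k, d k)| ≤ K * ε
    have hshift : Summable (fun k => d (k + n)) := (summable_nat_add_iff (f := d) n).2 hdsum
    have hshift_abs : Summable (fun k => |d (k + n)|) := (summable_nat_add_iff (f := fun k => |d k|) n).2 hdabs
    have hdiff : φ n - P n * (φ 0 + ∑' k, d k) = -(P n * ∑' k, d (k + n)) := by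
      rw [hψ n]
      have h2 : (∑' (k : ℕ), d k) = (∑ i ∈ Finset.range n, d i) + ∑' k, d (k + n) :=
        (Summable.sum_add_tsum_nat_add n hdsum).symm
      rw [h2]; ring
    rw [hdiff, abs_neg, abs_mul, hPabs]
    have habs_tsum : |∑' k, d (k + n)| ≤ ∑' k, |d (k + n)| := by
      have h1 := norm_tsum_le_tsum_norm (f := fun k => d (k + n))
        (by simpa [Real.norm_eq_abs] using hshift_abs)
      simpa [Real.norm_eq_abs] using h1
    have step1 : Pb n * |∑' k, d (k + n)| ≤ ∑' k, Pb n * |d (n + k)| := by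
      rw [tsum_mul_left]
      have h3 : (∑' k, |d (k + n)|) = ∑' k, |d (n + k)| :=
        tsum_congr fun k => by rw [add_comm]
      calc Pb n * |∑' k, d (k + n)| ≤ Pb n * ∑' k, |d (k + n)| :=
            mul_le_mul_of_nonneg_left habs_tsum (le_of_lt (hPbpos n))
        _ = Pb n * ∑' k, |d (n + k)| := by rw [h3]
    refine step1.trans ?_
    rw [← tsum_even_add_odd (f := fun k => Pb n * |d (n + k)|) (hsum_even n) (hsum_odd n)]
    have hgeosum : ∑' k : ℕ, r^k = (1 - r)⁻¹ := tsum_geometric_of_lt_one hr0 hr1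
    have hEbound : (∑' k, Pb n * |d (n + 2*k)|) ≤ (ε * μ n / b n) * (1 - r)⁻¹ := by
      calc (∑' k, Pb n * |d (n + 2*k)|) ≤ ∑' k, (ε * μ n / b n) * r^k :=
            Summable.tsum_le_tsum (heven n) (hsum_even n) (hgeo.mul_left _)
        _ = (ε * μ n / b n) * (1 - r)⁻¹ := by rw [tsum_mul_left, hgeosum]
    have hObound : (∑' k, Pb n * |d (n + (2*k+1))|) ≤ (ε * μ (n+1) / (A*B)) * (1 - r)⁻¹ := by
      calc (∑' k, Pb n * |d (n + (2*k+1))|) ≤ ∑' k, (ε * μ (n+1) / (A*B)) * r^k :=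
            Summable.tsum_le_tsum (hodd n) (hsum_odd n) (hgeo.mul_left _)
        _ = (ε * μ (n+1) / (A*B)) * (1 - r)⁻¹ := by rw [tsum_mul_left, hgeosum]
    refine le_trans (add_le_add hEbound hObound) ?_
    -- purely numerical endgame
    have hDne : A*B - 1 ≠ 0 := ne_of_gt hD
    have hABne : A*B ≠ 0 := ne_of_gt hABpos
    have hAne : A ≠ 0 := ne_of_gt hA
    have hBne : B ≠ 0 := ne_of_gt hB
    have hlLne : l * (l + 1/α + 1/β) ≠ 0 := ne_of_gt hlL
    have h1r : (1:ℝ) - r = (A*B - 1)/(A*B) := by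
      rw [hr_def]; field_simp
    have hKform : K = max (1/β - 1/α - l) (1/α - 1/β - l) / (l * (l + 1/α + 1/β)) := by
      rw [hK, abs_of_neg hl0, abs_of_neg hLneg]; ring_nf
    by_cases hn : Even n
    · have hμn : μ n = α := by rw [hμ]; simp [hn]
      have hμn1 : μ (n+1) = β := by rw [hμ]; simp [Nat.even_add_one, hn]
      have hbn : b n = A := by rw [hb]; simp [hn]
      rw [hμn, hμn1, hbn, h1r]
      have key : ε * α / A * ((A*B-1)/(A*B))⁻¹ + ε * β / (A*B) * ((A*B-1)/(A*B))⁻¹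
          = ε * (α*B + β) / (A*B - 1) := by
        field_simp
      rw [key]
      have hnum : α*B + β = (α*β) * (1/α - 1/β - l) := by
        rw [hB_def]; field_simp; ring
      have heq : ε * (α*B + β) / (A*B - 1)
          = (1/α - 1/β - l) / (l * (l + 1/α + 1/β)) * ε := by
        rw [hAB1eq, hnum]
        field_simp
      rw [heq, hKform]
      gcongr
      exact le_max_right _ _
    · have hμn : μ n = β := by rw [hμ]; simp [hn]
      have hμn1 : μ (n+1) = α := by rw [hμ]; simp [Nat.even_add_one, hn]
      have hbn : b n = B := by rw [hb]; simp [hn]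
      rw [hμn, hμn1, hbn, h1r]
      have key : ε * β / B * ((A*B-1)/(A*B))⁻¹ + ε * α / (A*B) * ((A*B-1)/(A*B))⁻¹
          = ε * (β*A + α) / (A*B - 1) := by
        field_simp
      rw [key]
      have hnum : β*A + α = (α*β) * (1/β - 1/α - l) := by
        rw [hA_def]; field_simp; ring
      have heq : ε * (β*A + α) / (A*B - 1)
          = (1/β - 1/α - l) / (l * (l + 1/α + 1/β)) * ε := by
        rw [hAB1eq, hnum]
        field_simp
      rw [heq, hKform]
      gcongr
      exact le_max_left _ _
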